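/- arXiv:1204.0301 — 2 statements merged into one kernel-verified Lean document; each statement's English description precedes it below -/
import Mathlib

section
/- In any finite set of closed bounded intervals on the real line whose union J has total length (Lebesgue measure) s, there exists a subset of pairwise disjoint intervals whose union has total length at least s/2. -/
open MeasureTheory

private lemma icc_disj {a₁ a₂ b₁ b₂ : ℝ} (h : a₂ < b₁) :
    Disjoint (Set.Icc a₁ a₂) (Set.Icc b₁ b₂) := by
  rw [Set.disjoint_left]
  intro x hx hx2
  have := hx.2
  have := hx2.1
  linarith

private lemma key (s : Finset (ℝ × ℝ)) :
    ∀ n : ℕ, ∀ β γ : ℝ, (s.filter (fun p => γ < p.2)).card ≤ n → β ≤ γ →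
      (∀ p ∈ s, γ < p.2 → β < p.1) →
      ∃ t1 t2 : Finset (ℝ × ℝ), t1 ⊆ s ∧ t2 ⊆ s ∧
        (∀ p ∈ t1, ∀ q ∈ t1, p ≠ q → Disjoint (Set.Icc p.1 p.2) (Set.Icc q.1 q.2)) ∧
        (∀ p ∈ t2, ∀ q ∈ t2, p ≠ q → Disjoint (Set.Icc p.1 p.2) (Set.Icc q.1 q.2)) ∧
        (∀ p ∈ t1, β < p.1) ∧ (∀ p ∈ t2, γ < p.1) ∧
        (⋃ p ∈ s, Set.Icc p.1 p.2) ⊆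
          Set.Iic γ ∪ (⋃ p ∈ t1, Set.Icc p.1 p.2) ∪ (⋃ p ∈ t2, Set.Icc p.1 p.2) := by
  intro n
  induction n with
  | zero =>
    intro β γ hcard hβγ hsep
    refine ⟨∅, ∅, Finset.empty_subset _, Finset.empty_subset _, by simp, by simp, by simp,
      by simp, ?_⟩
    intro x hx
    simp only [Set.mem_iUnion, exists_prop] at hx
    obtain ⟨p, hp, hxp⟩ := hx
    have hp2 : ¬ γ < p.2 := by
      intro hlt
      have : p ∈ s.filter (fun p => γ < p.2) := Finset.mem_filter.mpr ⟨hp, hlt⟩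
      have := Finset.card_pos.mpr ⟨p, this⟩
      omega
    left; left
    exact Set.mem_Iic.mpr (le_trans hxp.2 (le_of_not_gt hp2))
  | succ n ih =>
    intro β γ hcard hβγ hsep
    rcases (s.filter (fun p => γ < p.2)).eq_empty_or_nonempty with hemp | hne
    · refine ⟨∅, ∅, Finset.empty_subset _, Finset.empty_subset _, by simp, by simp, by simp,
        by simp, ?_⟩
      intro x hx
      simp only [Set.mem_iUnion, exists_prop] at hx
      obtain ⟨p, hp, hxp⟩ := hx
      have hp2 : ¬ γ < p.2 := by
        intro hlt
        have : p ∈ s.filter (fun p => γ < p.2) := Finset.mem_filter.mpr ⟨hp, hlt⟩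
        rw [hemp] at this
        exact absurd this (Finset.notMem_empty _)
      left; left
      exact Set.mem_Iic.mpr (le_trans hxp.2 (le_of_not_gt hp2))
    · set s' := s.filter (fun p => γ < p.2) with hs'
      set a0 : ℝ := s'.inf' hne (fun p => p.1) with ha0
      obtain ⟨q, hq, hqa0⟩ := Finset.exists_mem_eq_inf' hne (fun p => p.1)
      set S0 := s'.filter (fun p => p.1 ≤ max γ a0) with hS0
      have hqS0 : q ∈ S0 := by
        refine Finset.mem_filter.mpr ⟨hq, ?_⟩
        rw [← hqa0]
        exact le_max_right _ _
      obtain ⟨I, hIS0, hImax⟩ := S0.exists_max_image (fun p => p.2) ⟨q, hqS0⟩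
      have hIs' : I ∈ s' := (Finset.mem_filter.mp hIS0).1
      have hI1 : I.1 ≤ max γ a0 := (Finset.mem_filter.mp hIS0).2
      have hIs : I ∈ s := (Finset.mem_filter.mp hIs').1
      have hIγ : γ < I.2 := (Finset.mem_filter.mp hIs').2
      -- separation for the recursive call
      have hsep' : ∀ p ∈ s, I.2 < p.2 → γ < p.1 := by
        intro p hp hpb
        have hps' : p ∈ s' := Finset.mem_filter.mpr ⟨hp, lt_trans hIγ hpb⟩
        have hgt : max γ a0 < p.1 := by
          by_contra hle
          push_neg at hle
          have : p ∈ S0 := Finset.mem_filter.mpr ⟨hps', hle⟩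
          exact absurd (hImax p this) (not_le.mpr hpb)
        exact lt_of_le_of_lt (le_max_left _ _) hgt
      -- cardinality decrease
      have hcard' : (s.filter (fun p => I.2 < p.2)).card ≤ n := by
        have hss : s.filter (fun p => I.2 < p.2) ⊂ s' := by
          constructor
          · intro p hp
            have hp' := Finset.mem_filter.mp hp
            exact Finset.mem_filter.mpr ⟨hp'.1, lt_trans hIγ hp'.2⟩
          · intro hsub
            have := hsub hIs'
            have := (Finset.mem_filter.mp this).2
            exact absurd this (lt_irrefl _)
        have := Finset.card_lt_card hss
        omega
      obtain ⟨t1', t2', ht1s, ht2s, hd1, hd2, hl1, hl2, hcov⟩ :=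
        ih γ I.2 hcard' (le_of_lt hIγ) hsep'
      refine ⟨insert I t2', t1', ?_, ht1s, ?_, hd1, ?_, hl1, ?_⟩
      · rw [Finset.insert_subset_iff]; exact ⟨hIs, ht2s⟩
      · -- pairwise disjointness of insert I t2'
        intro p hp r hr hpr
        rcases Finset.mem_insert.mp hp with hpI | hpt <;>
          rcases Finset.mem_insert.mp hr with hrI | hrt
        · exact absurd (hpI.trans hrI.symm) hpr
        · subst hpI; exact icc_disj (hl2 r hrt)
        · subst hrI; exact (icc_disj (hl2 p hpt)).symm
        · exact hd2 p hpt r hrt hpr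
      · -- left endpoints of t1 exceed β
        intro p hp
        rcases Finset.mem_insert.mp hp with hpI | hpt
        · subst hpI; exact hsep p hIs hIγ
        · exact lt_of_le_of_lt hβγ (lt_of_lt_of_le hIγ (le_of_lt (hl2 p hpt)))
      · -- coverage
        intro x hx
        rcases hcov hx with (hle | hU1) | hU2
        · by_cases hxγ : x ≤ γ
          · left; left; exact hxγ
          · push_neg at hxγ
            -- show x ∈ Icc I.1 I.2
            simp only [Set.mem_iUnion, exists_prop] at hx
            obtain ⟨p, hp, hxp⟩ := hx
            have hps' : p ∈ s' :=
              Finset.mem_filter.mpr ⟨hp, lt_of_lt_of_le hxγ hxp.2⟩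
            have ha0p : a0 ≤ p.1 := Finset.inf'_le _ hps'
            have hI1x : I.1 ≤ x := by
              refine le_trans hI1 ?_
              exact max_le (le_of_lt hxγ) (le_trans ha0p hxp.1)
            left; right
            simp only [Set.mem_iUnion, exists_prop]
            exact ⟨I, Finset.mem_insert_self _ _, hI1x, hle⟩
        · right; exact hU1
        · left; right
          simp only [Set.mem_iUnion, exists_prop] at hU2 ⊢
          obtain ⟨p, hp, hxp⟩ := hU2
          exact ⟨p, Finset.mem_insert_of_mem hp, hxp⟩

/-- Schulman's interval lemma: in any finite set of closed bounded
intervals on ℝ there is a subset of pairwise disjoint intervals whose union has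
Lebesgue measure at least half that of the union of all the intervals. -/
theorem stmt7 (s : Finset (ℝ × ℝ)) (hs : ∀ p ∈ s, p.1 ≤ p.2) :
    ∃ t ⊆ s,
      (∀ p ∈ t, ∀ q ∈ t, p ≠ q → Disjoint (Set.Icc p.1 p.2) (Set.Icc q.1 q.2)) ∧
      volume (⋃ p ∈ s, Set.Icc p.1 p.2) ≤ 2 * volume (⋃ p ∈ t, Set.Icc p.1 p.2) := by
  rcases s.eq_empty_or_nonempty with hemp | hne
  · subst hemp
    exact ⟨∅, Finset.Subset.refl _, by simp, by simp⟩
  · set γ : ℝ := s.inf' hne (fun p => p.1) - 1 with hγ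
    have hsep : ∀ p ∈ s, γ < p.2 → γ < p.1 := by
      intro p hp _
      have := Finset.inf'_le (fun p => p.1) hp
      simp only [hγ]
      linarith
    obtain ⟨t1, t2, ht1s, ht2s, hd1, hd2, _, _, hcov⟩ :=
      key s s.card γ γ (Finset.card_filter_le _ _) le_rfl hsep
    have hsub : (⋃ p ∈ s, Set.Icc p.1 p.2) ⊆
        (⋃ p ∈ t1, Set.Icc p.1 p.2) ∪ (⋃ p ∈ t2, Set.Icc p.1 p.2) := by
      intro x hx
      rcases hcov hx with (hle | hU1) | hU2
      · exfalso
        simp only [Set.mem_iUnion, exists_prop] at hx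
        obtain ⟨p, hp, hxp⟩ := hx
        have := Finset.inf'_le (fun p => p.1) hp
        have hxγ : x ≤ γ := hle
        have := hxp.1
        simp only [hγ] at hxγ
        linarith
      · left; exact hU1
      · right; exact hU2
    have hvol : volume (⋃ p ∈ s, Set.Icc p.1 p.2) ≤
        volume (⋃ p ∈ t1, Set.Icc p.1 p.2) + volume (⋃ p ∈ t2, Set.Icc p.1 p.2) :=
      (measure_mono hsub).trans (measure_union_le _ _)
    rcases le_total (volume (⋃ p ∈ t1, Set.Icc p.1 p.2))
        (volume (⋃ p ∈ t2, Set.Icc p.1 p.2)) with h12 | h21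
    · refine ⟨t2, ht2s, hd2, ?_⟩
      calc volume (⋃ p ∈ s, Set.Icc p.1 p.2)
          ≤ volume (⋃ p ∈ t1, Set.Icc p.1 p.2) + volume (⋃ p ∈ t2, Set.Icc p.1 p.2) := hvol
        _ ≤ volume (⋃ p ∈ t2, Set.Icc p.1 p.2) + volume (⋃ p ∈ t2, Set.Icc p.1 p.2) :=
            add_le_add_left h12 _
        _ = 2 * volume (⋃ p ∈ t2, Set.Icc p.1 p.2) := (two_mul _).symm
    · refine ⟨t1, ht1s, hd1, ?_⟩
      calc volume (⋃ p ∈ s, Set.Icc p.1 p.2)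
          ≤ volume (⋃ p ∈ t1, Set.Icc p.1 p.2) + volume (⋃ p ∈ t2, Set.Icc p.1 p.2) := hvol
        _ ≤ volume (⋃ p ∈ t1, Set.Icc p.1 p.2) + volume (⋃ p ∈ t1, Set.Icc p.1 p.2) :=
            add_le_add_right h21 _
        _ = 2 * volume (⋃ p ∈ t1, Set.Icc p.1 p.2) := (two_mul _).symm
end

section
/- Consider the state evolution n_{vu}(t+1) = n_{vu}(t) + X^{vu}_{t+1}·[n_u(t) > n_{vu}(t)] with n_v(t) = 1 + min_{u ∈ N_v} n_{vu}(t) on a graph, where X^{vu}_t ∈ {0,1} and initial values n_{vu}(0) = 0. Then for all adjacent nodes u, v and all times t, |n_u(t) − n_v(t)| ≤ 1. -/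
open Finset

/-- under the state evolution
`n_{vu}(t+1) = n_{vu}(t) + X^{vu}_{t+1}·[n_u(t) > n_{vu}(t)]` with
`n_v(t) = 1 + min_{u ∈ N_v} n_{vu}(t)`, `n_{vu}(0) = 0`, and symmetric 0/1
erasures `X`, neighboring nodes' iteration counts differ by at most 1. -/
theorem stmt15 {V : Type*} [Fintype V] [DecidableEq V]
    (G : SimpleGraph V) [DecidableRel G.Adj]
    (hnb : ∀ v : V, (G.neighborFinset v).Nonempty)
    (X : V → V → ℕ → ℕ)
    (hX01 : ∀ v u t, X v u t ≤ 1)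
    (hXsym : ∀ v u t, X v u t = X u v t)
    (n : V → V → ℕ → ℕ) (nf : V → ℕ → ℕ)
    (hnf : ∀ v t, nf v t = 1 + (G.neighborFinset v).inf' (hnb v) (fun u => n v u t))
    (hinit : ∀ v u, n v u 0 = 0)
    (hrec : ∀ v u t, G.Adj v u →
      n v u (t + 1) = n v u t + X v u (t + 1) * (if n v u t < nf u t then 1 else 0)) :
    ∀ u v, G.Adj u v → ∀ t, |(nf u t : ℤ) - (nf v t : ℤ)| ≤ 1 := by
  -- nf is monotone in t
  have hmono : ∀ u t, nf u t ≤ nf u (t + 1) := by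
    intro u t
    rw [hnf, hnf]
    apply Nat.add_le_add_left
    apply Finset.le_inf'
    intro w hw
    refine le_trans (Finset.inf'_le _ hw) ?_
    rw [hrec u w t ((G.mem_neighborFinset u w).1 hw)]
    exact Nat.le_add_right _ _
  -- key invariant
  have inv : ∀ t v u, G.Adj v u → n v u t ≤ nf u t := by
    intro t
    induction t with
    | zero =>
      intro v u _
      rw [hinit, hnf]
      exact Nat.zero_le _
    | succ t ih =>
      intro v u hadj
      have h := ih v u hadj
      rw [hrec v u t hadj]
      by_cases hlt : n v u t < nf u t
      · simp only [hlt, if_true, mul_one]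
        have hx := hX01 v u (t + 1)
        have := hmono u t
        omega
      · simp only [hlt, if_false, mul_zero, add_zero]
        have := hmono u t
        omega
  intro u v hadj t
  have h1 : nf u t ≤ 1 + nf v t := by
    rw [hnf]
    have hv : v ∈ G.neighborFinset u := (G.mem_neighborFinset u v).2 hadj
    have := Finset.inf'_le (fun w => n u w t) hv
    have := inv t u v hadj
    omega
  have h2 : nf v t ≤ 1 + nf u t := by
    rw [hnf]
    have hu : u ∈ G.neighborFinset v := (G.mem_neighborFinset v u).2 hadj.symm
    have := Finset.inf'_le (fun w => n v w t) hu
    have := inv t v u hadj.symm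
    omega
  rw [abs_le]
  constructor <;> push_cast <;> omega
end
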